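/- In the ring ℂ[z, w, w⁻¹] of polynomials in z that are Laurent polynomials in w, equipped with the Poisson bracket {f, g} = w·((∂f/∂z)(∂g/∂w) − (∂f/∂w)(∂g/∂z)), the smallest ℂ-linear subspace containing all monomials z^j (j ∈ ℕ) and w^k (k ∈ ℤ, k ≠ 0) and closed under the bracket is the whole ring ℂ[z, w, w⁻¹]. -/

import Mathlib

/-- The ring `ℂ[z, w, w⁻¹]` of polynomials in `z` that are Laurent polynomials
in `w`, modelled as the monoid algebra of `ℕ × ℤ`: the monomial `z^j w^k`
corresponds to `single (j, k) 1`. -/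
abbrev PLaurent : Type := AddMonoidAlgebra ℂ (ℕ × ℤ)

/-- The monomial `z^j w^k`. -/
noncomputable def zw (j : ℕ) (k : ℤ) : PLaurent := AddMonoidAlgebra.single (j, k) 1

/-- The formal partial derivative `∂/∂z`. -/
noncomputable def Dz (f : PLaurent) : PLaurent :=
  Finsupp.sum f.coeff fun p c => AddMonoidAlgebra.single (p.1 - 1, p.2) (c * (p.1 : ℂ))

/-- The formal partial derivative `∂/∂w`. -/
noncomputable def Dw (f : PLaurent) : PLaurent :=
  Finsupp.sum f.coeff fun p c => AddMonoidAlgebra.single (p.1, p.2 - 1) (c * (p.2 : ℂ))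

/-- The Poisson bracket `{f,g} = w (f_z g_w − f_w g_z)`. -/
noncomputable def pbL (f g : PLaurent) : PLaurent :=
  zw 0 1 * (Dz f * Dw g - Dw f * Dz g)

/-- The smallest ℂ-linear subspace of `ℂ[z,w,w⁻¹]` containing all monomials
`z^j` (`j ∈ ℕ`) and `w^k` (`k ∈ ℤ`, `k ≠ 0`) and closed under the bracket. -/
inductive GenL : PLaurent → Prop
  | zpow (j : ℕ) : GenL (zw j 0)
  | wpow (k : ℤ) : k ≠ 0 → GenL (zw 0 k)
  | zero : GenL 0
  | add {f g} : GenL f → GenL g → GenL (f + g)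
  | smul (c : ℂ) {f} : GenL f → GenL (c • f)
  | bracket {f g} : GenL f → GenL g → GenL (pbL f g)

lemma Dz_single (j : ℕ) (k : ℤ) (c : ℂ) :
    Dz (AddMonoidAlgebra.single (j, k) c) =
      AddMonoidAlgebra.single (j - 1, k) (c * (j : ℂ)) := by
  unfold Dz
  rw [AddMonoidAlgebra.coeff_single, Finsupp.sum_single_index]
  simp

lemma Dw_single (j : ℕ) (k : ℤ) (c : ℂ) :
    Dw (AddMonoidAlgebra.single (j, k) c) =
      AddMonoidAlgebra.single (j, k - 1) (c * (k : ℂ)) := by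
  unfold Dw
  rw [AddMonoidAlgebra.coeff_single, Finsupp.sum_single_index]
  simp

lemma pb_key (j : ℕ) (k : ℤ) :
    pbL (zw (j + 1) 0) (zw 0 k) =
      AddMonoidAlgebra.single (j, k) (((j : ℂ) + 1) * (k : ℂ)) := by
  unfold pbL zw
  rw [Dz_single, Dw_single, Dz_single, Dw_single]
  simp only [Nat.add_sub_cancel, Int.cast_zero, mul_zero, Nat.cast_zero,
    AddMonoidAlgebra.single_zero, zero_mul, mul_zero, sub_zero, Nat.cast_ofNat]
  rw [AddMonoidAlgebra.single_mul_single, AddMonoidAlgebra.single_mul_single]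
  congr 1
  · ext <;> simp <;> ring
  · push_cast; ring

lemma genL_zw (j : ℕ) (k : ℤ) : GenL (zw j k) := by
  rcases eq_or_ne k 0 with rfl | hk
  · exact GenL.zpow j
  · have h : (((j : ℂ) + 1) * (k : ℂ)) ≠ 0 := by
      apply mul_ne_zero
      · exact Nat.cast_add_one_ne_zero j
      · exact_mod_cast hk
    have := GenL.bracket (GenL.zpow (j + 1)) (GenL.wpow k hk)
    have h2 := GenL.smul ((((j : ℂ) + 1) * (k : ℂ))⁻¹) this
    rw [pb_key] at h2
    convert h2 using 1
    unfold zw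
    rw [AddMonoidAlgebra.smul_single']
    congr 1
    field_simp

/-- this subspace is the whole ring `ℂ[z, w, w⁻¹]`. -/
theorem stmt_14 (f : PLaurent) : GenL f := by
  induction f using AddMonoidAlgebra.induction with
  | zero => exact GenL.zero
  | single_add p c f _ _ ih =>
    refine GenL.add ?_ ih
    have := GenL.smul c (genL_zw p.1 p.2)
    rwa [zw, AddMonoidAlgebra.smul_single, smul_eq_mul, mul_one] at this
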